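/- If X is a T1 space such that the Alexandroff duplicate AD(X) is star-Lindelöf, then the extent of X is countable; that is, every closed discrete subset of X is countable. -/
import Mathlib


open Set

/-- Star of a set `A` with respect to a family `P`: `St(A,P) = ⋃{B ∈ P : A ∩ B ≠ ∅}`. -/
def st {X : Type*} (A : Set X) (P : Set (Set X)) : Set X :=
  ⋃₀ {B | B ∈ P ∧ (A ∩ B).Nonempty}

/-- `U` is an open cover of the space. -/
def IsOpenCover {X : Type*} [TopologicalSpace X] (U : Set (Set X)) : Prop :=
  (∀ V ∈ U, IsOpen V) ∧ ⋃₀ U = Set.univ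

/-- An ω-cover: an open cover such that every finite subset lies in some member. -/
def IsOmegaCover {X : Type*} [TopologicalSpace X] (U : Set (Set X)) : Prop :=
  IsOpenCover U ∧ ∀ F : Set X, F.Finite → ∃ V ∈ U, F ⊆ V

/-- The star-K-Scheepers property. -/
def StarKScheepers (X : Type*) [TopologicalSpace X] : Prop :=
  ∀ U : ℕ → Set (Set X), (∀ n, IsOpenCover (U n)) →
    ∃ K : ℕ → Set X, (∀ n, IsCompact (K n)) ∧
      IsOmegaCover {S | ∃ n, S = st (K n) (U n)}

/-- The topology of the Alexandroff duplicate `AD(X) = X × Bool`: points `(x, true)` are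
isolated, and basic neighbourhoods of `(x, false)` are
`(U ×ˢ univ) \ {(x, true)}` for `U` an open neighbourhood of `x`. -/
def ADTopology (X : Type*) [TopologicalSpace X] : TopologicalSpace (X × Bool) where
  IsOpen S := ∀ x : X, (x, false) ∈ S →
    ∃ U : Set X, IsOpen U ∧ x ∈ U ∧ (U ×ˢ (Set.univ : Set Bool)) \ {(x, true)} ⊆ S
  isOpen_univ := fun x _ =>
    ⟨Set.univ, isOpen_univ, trivial, fun _ _ => trivial⟩
  isOpen_inter := fun s t hs ht x hx => by
    obtain ⟨U, hU, hxU, hUs⟩ := hs x hx.1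
    obtain ⟨V, hV, hxV, hVt⟩ := ht x hx.2
    refine ⟨U ∩ V, hU.inter hV, ⟨hxU, hxV⟩, fun p hp => ?_⟩
    exact ⟨hUs ⟨⟨hp.1.1.1, hp.1.2⟩, hp.2⟩, hVt ⟨⟨hp.1.1.2, hp.1.2⟩, hp.2⟩⟩
  isOpen_sUnion := fun 𝒮 h x hx => by
    obtain ⟨t, ht𝒮, hxt⟩ := hx
    obtain ⟨U, hU, hxU, hUt⟩ := h t ht𝒮 x hxt
    exact ⟨U, hU, hxU, fun p hp => ⟨t, ht𝒮, hUt hp⟩⟩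

/-- The star-Lindelöf property. -/
def StarLindelof (X : Type*) [TopologicalSpace X] : Prop :=
  ∀ U : Set (Set X), IsOpenCover U →
    ∃ V ⊆ U, V.Countable ∧ st (⋃₀ V) U = Set.univ

/-- If `X` is `T1` and `AD(X)` is star-Lindelöf, then every closed discrete subset of
`X` is countable (the extent of `X` is countable). -/
theorem countable_extent_of_AD_starLindelof {X : Type*} [TopologicalSpace X] [T1Space X]
    (h : @StarLindelof (X × Bool) (ADTopology X)) :
    ∀ D : Set X, IsClosed D → DiscreteTopology D → D.Countable := by
  intro D hDcl hDdisc
  -- separating neighbourhoods from discreteness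
  have hsep : ∀ d ∈ D, ∃ U : Set X, IsOpen U ∧ d ∈ U ∧ ∀ y ∈ U, y ∈ D → y = d := by
    intro d hd
    have hop : IsOpen ({⟨d, hd⟩} : Set D) := isOpen_discrete _
    rw [isOpen_induced_iff] at hop
    obtain ⟨U, hU, hUeq⟩ := hop
    have hdU : d ∈ U := by
      have : (⟨d, hd⟩ : D) ∈ ({⟨d, hd⟩} : Set D) := rfl
      rw [← hUeq] at this; exact this
    refine ⟨U, hU, hdU, fun y hy hyD => ?_⟩
    have : (⟨y, hyD⟩ : D) ∈ (Subtype.val ⁻¹' U : Set D) := hy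
    rw [hUeq] at this
    exact congrArg Subtype.val this
  -- the cover of AD(X)
  set W : Set (X × Bool) := {p | p.1 ∈ D → p.2 = false} with hW
  set 𝒰 : Set (Set (X × Bool)) := insert W {S | ∃ d ∈ D, S = {(d, true)}} with h𝒰
  have hWopen : @IsOpen _ (ADTopology X) W := by
    intro x _
    by_cases hx : x ∈ D
    · obtain ⟨U, hU, hxU, hUD⟩ := hsep x hx
      refine ⟨U, hU, hxU, fun p hp => ?_⟩
      intro hpD
      have h1 : p.1 = x := hUD p.1 hp.1.1 hpD
      cases hb : p.2 with
      | false => rfl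
      | true =>
        exfalso
        exact hp.2 (by rw [Set.mem_singleton_iff, Prod.ext_iff]; exact ⟨h1, hb⟩)
    · exact ⟨Dᶜ, hDcl.isOpen_compl, hx, fun p hp hpD => absurd hpD hp.1.1⟩
  have hcov : @IsOpenCover _ (ADTopology X) 𝒰 := by
    constructor
    · intro V hV
      rcases hV with hV | ⟨d, hd, rfl⟩
      · rw [hV]; exact hWopen
      · intro x hx
        exfalso
        rw [Set.mem_singleton_iff, Prod.ext_iff] at hx
        exact Bool.false_ne_true hx.2
    · ext p
      simp only [Set.mem_univ, iff_true, Set.mem_sUnion]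
      by_cases hp : p.1 ∈ D ∧ p.2 = true
      · exact ⟨{(p.1, true)}, Or.inr ⟨p.1, hp.1, rfl⟩, by
          rw [Set.mem_singleton_iff, Prod.ext_iff]; exact ⟨rfl, hp.2⟩⟩
      · refine ⟨W, Or.inl rfl, fun hpD => ?_⟩
        cases hb : p.2 with
        | false => rfl
        | true => exact absurd ⟨hpD, hb⟩ hp
  obtain ⟨V, hV𝒰, hVc, hVst⟩ := h 𝒰 hcov
  -- every d ∈ D has its singleton in V
  have key : ∀ d ∈ D, ({(d, true)} : Set (X × Bool)) ∈ V := by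
    intro d hd
    have hmem : (d, true) ∈ st (⋃₀ V) 𝒰 := by rw [hVst]; trivial
    obtain ⟨B, ⟨hBU, hBne⟩, hdB⟩ := hmem
    have hBsing : B = {(d, true)} := by
      rcases hBU with hBW | ⟨e, _, rfl⟩
      · exfalso
        rw [hBW] at hdB
        exact Bool.noConfusion (hdB hd)
      · rw [Set.mem_singleton_iff] at hdB
        rw [hdB]
    obtain ⟨p, hpV, hpB⟩ := hBne
    rw [hBsing, Set.mem_singleton_iff] at hpB
    subst hpB
    obtain ⟨C, hCV, hdC⟩ := hpV
    have hC : C = {(d, true)} := by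
      rcases hV𝒰 hCV with hCW | ⟨e, _, rfl⟩
      · exfalso
        rw [hCW] at hdC
        exact Bool.noConfusion (hdC hd)
      · rw [Set.mem_singleton_iff] at hdC
        rw [hdC]
    rw [← hC]; exact hCV
  -- conclude countability
  have hinj : Set.InjOn (fun d : X => ({(d, true)} : Set (X × Bool))) D := by
    intro a _ b _ hab
    simpa [Set.singleton_eq_singleton_iff, Prod.ext_iff] using hab
  have himg : (fun d : X => ({(d, true)} : Set (X × Bool))) '' D ⊆ V := by
    rintro _ ⟨d, hd, rfl⟩
    exact key d hd
  exact Set.countable_of_injective_of_countable_image hinj (hVc.mono himg)
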